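/- Let β : [1,∞) → (0,∞) be non-increasing with s ↦ sβ(s) non-decreasing on [2,∞). Then for every a ∈ (0,1/2): (1/2)·a/β(1/a) ≤ sup_{s ≥ 1} a/((1+(s−1)a)β(s)) ≤ 2a/β(1/a). -/
import Mathlib


open Set

/-- Corollary 5 (estimate \eqref{eq:beta}): if `β : [1,∞) → (0,∞)` is non-increasing
and `s ↦ s β(s)` is non-decreasing on `[2,∞)`, then for every `a ∈ (0,1/2)`,
`(1/2) a/β(1/a) ≤ sup_{s ≥ 1} a/((1+(s−1)a) β(s)) ≤ 2 a/β(1/a)`. -/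
theorem stmt_7 (β : ℝ → ℝ)
    (hβpos : ∀ s ∈ Ici (1:ℝ), 0 < β s)
    (hβanti : AntitoneOn β (Ici 1))
    (hβmono : MonotoneOn (fun s => s * β s) (Ici 2)) :
    ∀ a ∈ Ioo (0:ℝ) (1/2),
      (1/2) * (a / β (1/a))
          ≤ sSup { r : ℝ | ∃ s : ℝ, 1 ≤ s ∧ r = a / ((1 + (s - 1) * a) * β s) }
        ∧ sSup { r : ℝ | ∃ s : ℝ, 1 ≤ s ∧ r = a / ((1 + (s - 1) * a) * β s) }
          ≤ 2 * (a / β (1/a)) := by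
  intro a ha
  obtain ⟨ha0, ha2⟩ := ha
  have hainv2 : (2:ℝ) ≤ 1/a := by
    rw [le_div_iff₀ ha0]; linarith
  have hainv1 : (1:ℝ) ≤ 1/a := by linarith
  have hβa : 0 < β (1/a) := hβpos _ hainv1
  -- the key bound: every element of the set is ≤ a / β (1/a)
  have hbound : ∀ r ∈ { r : ℝ | ∃ s : ℝ, 1 ≤ s ∧ r = a / ((1 + (s - 1) * a) * β s) },
      r ≤ a / β (1/a) := by
    rintro r ⟨s, hs, rfl⟩
    have hβs : 0 < β s := hβpos _ hs
    have hden : (0:ℝ) < 1 + (s - 1) * a := by nlinarith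
    have key : β (1/a) ≤ (1 + (s - 1) * a) * β s := by
      rcases le_total s (1/a) with h | h
      · have h1 : β (1/a) ≤ β s := hβanti hs hainv1 h
        have h2 : 1 * β s ≤ (1 + (s - 1) * a) * β s :=
          mul_le_mul_of_nonneg_right (by nlinarith [mul_nonneg (sub_nonneg.2 hs) ha0.le]) hβs.le
        rw [one_mul] at h2
        linarith
      · have h1 : (1/a) * β (1/a) ≤ s * β s := hβmono hainv2 (le_trans hainv2 h) h
        have h2 : β (1/a) ≤ a * (s * β s) := by
          have := mul_le_mul_of_nonneg_left h1 ha0.le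
          calc β (1/a) = a * ((1/a) * β (1/a)) := by
                field_simp
            _ ≤ a * (s * β s) := this
        nlinarith
    exact div_le_div_of_nonneg_left ha0.le hβa key
  have hne : { r : ℝ | ∃ s : ℝ, 1 ≤ s ∧ r = a / ((1 + (s - 1) * a) * β s) }.Nonempty :=
    ⟨a / ((1 + (1 - 1) * a) * β 1), 1, le_refl 1, rfl⟩
  have hbdd : BddAbove { r : ℝ | ∃ s : ℝ, 1 ≤ s ∧ r = a / ((1 + (s - 1) * a) * β s) } :=
    ⟨a / β (1/a), hbound⟩
  constructor
  · -- lower bound: take s = 1/a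
    have hmem : a / ((2 - a) * β (1/a)) ∈
        { r : ℝ | ∃ s : ℝ, 1 ≤ s ∧ r = a / ((1 + (s - 1) * a) * β s) } := by
      refine ⟨1/a, hainv1, ?_⟩
      have : 1 + (1/a - 1) * a = 2 - a := by field_simp; ring
      rw [this]
    have h1 : (1/2) * (a / β (1/a)) ≤ a / ((2 - a) * β (1/a)) := by
      rw [show (1:ℝ)/2 * (a / β (1/a)) = a / (2 * β (1/a)) by ring]
      refine div_le_div_of_nonneg_left ha0.le (mul_pos (by linarith) hβa) ?_
      nlinarith
    exact le_trans h1 (le_csSup hbdd hmem)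
  · refine le_trans (csSup_le hne hbound) ?_
    have : 0 ≤ a / β (1/a) := by positivity
    linarith
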